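/- Let M ∈ A. (1) If N is a subobject of M or a quotient of M, then P(M ⊕ N) = P(M) as subspaces of P(A). (2) For every n ≥ 1, P(M^n) = P(M) as subspaces of P(A). -/

import Mathlib

set_option maxHeartbeats 1000000
set_option synthInstance.maxHeartbeats 400000

open CategoryTheory CategoryTheory.Limits Module TensorProduct

universe v u

attribute [local instance] CategoryTheory.Abelian.hasFiniteBiproducts

/-- A fiber functor on a `ℚ`-linear Abelian category, defined over a field `F ⊇ ℚ`:
a `ℚ`-linear, exact, faithful functor into finite-dimensional `F`-vector spaces. -/
structure FiberFunctor (A : Type u) [Category.{v} A] [Abelian A] [CategoryTheory.Linear ℚ A]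
    (F : Type) [Field F] [Algebra ℚ F] where
  H : A ⥤ ModuleCat.{0} F
  additive : H.Additive
  linear : ∀ (q : ℚ) {M N : A} (f : M ⟶ N), H.map (q • f) = (algebraMap ℚ F q) • H.map f
  exact_left : Limits.PreservesFiniteLimits H
  exact_right : Limits.PreservesFiniteColimits H
  faithful : H.Faithful
  finDim : ∀ M : A, FiniteDimensional F (H.obj M)

variable (A : Type u) [Category.{v} A] [Abelian A] [CategoryTheory.Linear ℚ A]
variable (K : Subfield ℂ)
variable (HB : FiberFunctor A ℚ) (HdR : FiberFunctor A ↥K)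

/-- The index type of the free module on symbols `(M, σ, ω)`. -/
abbrev PIdx := Σ M : A, (HB.H.obj M) × Module.Dual ↥K (HdR.H.obj M)

/-- The free `K`-module on symbols `(M, σ, ω)`. -/
abbrev FreeMod := PIdx A K HB HdR →₀ ↥K

/-- Generators of the relations defining `P(A)` as a quotient of the free `K`-module on
symbols `(σ ⊗ ω)_M`: bilinearity relations (making the quotient by them the direct sum
`⊕_M H_B(M) ⊗_ℚ H_dR(M)^∨`) together with the period relations
`(σ ⊗ α^∨(ω))_M = (α(σ) ⊗ ω)_N` for morphisms `α : M ⟶ N`. -/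
def RelGen (x : FreeMod A K HB HdR) : Prop :=
  (∃ (M : A) (σ σ' : HB.H.obj M) (ω : Module.Dual ↥K (HdR.H.obj M)),
      x = Finsupp.single ⟨M, (σ + σ', ω)⟩ 1 - Finsupp.single ⟨M, (σ, ω)⟩ 1
            - Finsupp.single ⟨M, (σ', ω)⟩ 1) ∨
  (∃ (M : A) (σ : HB.H.obj M) (ω ω' : Module.Dual ↥K (HdR.H.obj M)),
      x = Finsupp.single ⟨M, (σ, ω + ω')⟩ 1 - Finsupp.single ⟨M, (σ, ω)⟩ 1
            - Finsupp.single ⟨M, (σ, ω')⟩ 1) ∨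
  (∃ (M : A) (q : ℚ) (σ : HB.H.obj M) (ω : Module.Dual ↥K (HdR.H.obj M)),
      x = Finsupp.single ⟨M, (q • σ, ω)⟩ 1 - Finsupp.single ⟨M, (σ, ω)⟩ (algebraMap ℚ ↥K q)) ∨
  (∃ (M : A) (c : ↥K) (σ : HB.H.obj M) (ω : Module.Dual ↥K (HdR.H.obj M)),
      x = Finsupp.single ⟨M, (σ, c • ω)⟩ 1 - Finsupp.single ⟨M, (σ, ω)⟩ c) ∨
  (∃ (M N : A) (α : M ⟶ N) (σ : HB.H.obj M) (ω : Module.Dual ↥K (HdR.H.obj N)),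
      x = Finsupp.single ⟨M, (σ, ω.comp (HdR.H.map α).hom)⟩ 1
            - Finsupp.single ⟨N, (HB.H.map α σ, ω)⟩ 1)

/-- The submodule of relations defining `P(A)`. -/
noncomputable def PRel : Submodule ↥K (FreeMod A K HB HdR) :=
  Submodule.span ↥K {x | RelGen A K HB HdR x}

/-- The space of formal periods `P(A)`. -/
abbrev PA := FreeMod A K HB HdR ⧸ PRel A K HB HdR

/-- The class of the formal period `(σ ⊗ ω)_M` in `P(A)`. -/
noncomputable def per (M : A) (σ : HB.H.obj M) (ω : Module.Dual ↥K (HdR.H.obj M)) :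
    PA A K HB HdR :=
  Submodule.Quotient.mk (Finsupp.single ⟨M, (σ, ω)⟩ 1)

/-- `P(M)`: the image of `H_B(M) ⊗_ℚ H_dR(M)^∨` in `P(A)`. -/
noncomputable def PM (M : A) : Submodule ↥K (PA A K HB HdR) :=
  Submodule.span ↥K {x | ∃ σ ω, x = per A K HB HdR M σ ω}

/-- The `m`-th power `M^m` of an object. -/
noncomputable abbrev pow (M : A) (m : ℕ) : A := ⨁ (fun _ : Fin m => M)

/-- The free `K`-module on symbols `σ ⊗ ω` for a single object `M`,
of which `H_B(M) ⊗_ℚ H_dR(M)^∨` is the quotient by the bilinearity relations. -/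
abbrev FreeModM (M : A) := ((HB.H.obj M) × Module.Dual ↥K (HdR.H.obj M)) →₀ ↥K

/-- Generators of the relations defining `P^k(M)` (`k ∈ ℕ ∪ {∞}`, encoded as `k : ℕ∞`):
bilinearity relations together with the depth `≤ k` relations `∑_{i=1}^m σ_i ⊗ ω_i = 0`
for every exact sequence `0 → N' → M^m → N → 0` with `m ≤ k`, `(σ_i) ∈ H_B(N')` and
`(ω_i) ∈ H_dR(N)^∨`. -/
def RelGenDepth (M : A) (k : ℕ∞) (x : FreeModM A K HB HdR M) : Prop :=
  (∃ (σ σ' : HB.H.obj M) (ω : Module.Dual ↥K (HdR.H.obj M)),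
      x = Finsupp.single (σ + σ', ω) 1 - Finsupp.single (σ, ω) 1 - Finsupp.single (σ', ω) 1) ∨
  (∃ (σ : HB.H.obj M) (ω ω' : Module.Dual ↥K (HdR.H.obj M)),
      x = Finsupp.single (σ, ω + ω') 1 - Finsupp.single (σ, ω) 1 - Finsupp.single (σ, ω') 1) ∨
  (∃ (q : ℚ) (σ : HB.H.obj M) (ω : Module.Dual ↥K (HdR.H.obj M)),
      x = Finsupp.single (q • σ, ω) 1 - Finsupp.single (σ, ω) (algebraMap ℚ ↥K q)) ∨
  (∃ (c : ↥K) (σ : HB.H.obj M) (ω : Module.Dual ↥K (HdR.H.obj M)),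
      x = Finsupp.single (σ, c • ω) 1 - Finsupp.single (σ, ω) c) ∨
  (∃ (m : ℕ), 1 ≤ m ∧ (m : ℕ∞) ≤ k ∧
    ∃ (N' N : A) (f : N' ⟶ pow A M m) (g : pow A M m ⟶ N) (w : f ≫ g = 0),
      (ShortComplex.mk f g w).ShortExact ∧
      ∃ (s : HB.H.obj N') (ω' : Module.Dual ↥K (HdR.H.obj N)),
        x = ∑ j : Fin m,
          Finsupp.single
            (HB.H.map (f ≫ biproduct.π (fun _ : Fin m => M) j) s,
             ω'.comp (HdR.H.map (biproduct.ι (fun _ : Fin m => M) j ≫ g)).hom) 1)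

/-- The submodule of relations defining `P^k(M)`. -/
noncomputable def PRelDepth (M : A) (k : ℕ∞) : Submodule ↥K (FreeModM A K HB HdR M) :=
  Submodule.span ↥K {x | RelGenDepth A K HB HdR M k x}

/-- The space `P^k(M)` of formal periods of depth `k` of `M`; `P^∞(M)` is `PkM M ⊤`. -/
abbrev PkM (M : A) (k : ℕ∞) := FreeModM A K HB HdR M ⧸ PRelDepth A K HB HdR M k

/-- The canonical map from the free module on symbols `σ ⊗ ω` at `M` to the one on all
symbols `(σ ⊗ ω)_N`, inducing the canonical map `P^∞(M) → P(A)`. -/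
noncomputable def toFree (M : A) : FreeModM A K HB HdR M →ₗ[↥K] FreeMod A K HB HdR :=
  Finsupp.lmapDomain ↥K ↥K (fun t => (⟨M, t⟩ : PIdx A K HB HdR))


section AuxPeriods

variable {A K HB HdR}

/-- The fundamental relation: `(σ ⊗ α^∨(ω))_X = (α(σ) ⊗ ω)_Y` in `P(A)`. -/
lemma per_rel {X Y : A} (α : X ⟶ Y) (σ : HB.H.obj X)
    (ω : Module.Dual ↥K (HdR.H.obj Y)) :
    per A K HB HdR X σ (ω.comp (HdR.H.map α).hom) = per A K HB HdR Y (HB.H.map α σ) ω := by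
  show Submodule.Quotient.mk _ = Submodule.Quotient.mk _
  rw [Submodule.Quotient.eq]
  exact Submodule.subset_span
    (Or.inr (Or.inr (Or.inr (Or.inr ⟨X, Y, α, σ, ω, rfl⟩))))

lemma per_add {X : A} (σ σ' : HB.H.obj X) (ω : Module.Dual ↥K (HdR.H.obj X)) :
    per A K HB HdR X (σ + σ') ω = per A K HB HdR X σ ω + per A K HB HdR X σ' ω := by
  have h : per A K HB HdR X (σ + σ') ω - per A K HB HdR X σ ω - per A K HB HdR X σ' ω = 0 := by
    show Submodule.Quotient.mk _ - Submodule.Quotient.mk _ - Submodule.Quotient.mk _ = 0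
    rw [← Submodule.Quotient.mk_sub, ← Submodule.Quotient.mk_sub,
      Submodule.Quotient.mk_eq_zero]
    exact Submodule.subset_span (Or.inl ⟨X, σ, σ', ω, rfl⟩)
  have := sub_eq_iff_eq_add.mp (sub_eq_iff_eq_add.mp h)
  rw [this]; abel

lemma per_zero {X : A} (ω : Module.Dual ↥K (HdR.H.obj X)) :
    per A K HB HdR X 0 ω = 0 := by
  have h := per_add (A := A) (K := K) (HB := HB) (HdR := HdR) (X := X) 0 0 ω
  rw [add_zero] at h
  exact (left_eq_add.mp h)

lemma per_sum {X : A} {ι : Type} [Fintype ι] (σ : ι → HB.H.obj X)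
    (ω : Module.Dual ↥K (HdR.H.obj X)) :
    per A K HB HdR X (∑ j, σ j) ω = ∑ j, per A K HB HdR X (σ j) ω := by
  classical
  induction (Finset.univ : Finset ι) using Finset.induction with
  | empty => simpa using per_zero ω
  | insert _ _ h ih => rw [Finset.sum_insert h, Finset.sum_insert h, per_add, ih]

lemma per_mem_PM {X : A} (σ : HB.H.obj X) (ω : Module.Dual ↥K (HdR.H.obj X)) :
    per A K HB HdR X σ ω ∈ PM A K HB HdR X :=
  Submodule.subset_span ⟨σ, ω, rfl⟩

lemma PM_le_of_mono {X Y : A} (α : X ⟶ Y) [Mono α] :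
    PM A K HB HdR X ≤ PM A K HB HdR Y := by
  haveI := HdR.exact_left
  have hinj : Function.Injective (HdR.H.map α) :=
    (ModuleCat.mono_iff_injective (HdR.H.map α)).mp inferInstance
  rw [PM, Submodule.span_le]
  rintro x ⟨σ, ω, rfl⟩
  obtain ⟨ω', hω'⟩ := LinearMap.dualMap_surjective_of_injective (f := (HdR.H.map α).hom) hinj ω
  have hω : ω = ω'.comp (HdR.H.map α).hom := by
    rw [← hω']; ext x; simp [LinearMap.dualMap_apply]
  rw [hω, per_rel]
  exact per_mem_PM _ _

lemma PM_le_of_epi {X Y : A} (α : X ⟶ Y) [Epi α] :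
    PM A K HB HdR Y ≤ PM A K HB HdR X := by
  haveI := HB.exact_right
  have hsurj : Function.Surjective (HB.H.map α) :=
    (ModuleCat.epi_iff_surjective (HB.H.map α)).mp inferInstance
  rw [PM, Submodule.span_le]
  rintro x ⟨σ, ω, rfl⟩
  obtain ⟨σ', hσ'⟩ := hsurj σ
  rw [← hσ', ← per_rel]
  exact per_mem_PM _ _

lemma PM_biprod_le (X Y : A) :
    PM A K HB HdR (X ⊞ Y) ≤ PM A K HB HdR X ⊔ PM A K HB HdR Y := by
  haveI := HB.additive
  rw [PM, Submodule.span_le]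
  rintro x ⟨σ, ω, rfl⟩
  have hσ : σ = HB.H.map (biprod.inl : X ⟶ X ⊞ Y) (HB.H.map biprod.fst σ)
      + HB.H.map (biprod.inr : Y ⟶ X ⊞ Y) (HB.H.map biprod.snd σ) := by
    have h1 : HB.H.map (𝟙 (X ⊞ Y)) σ = σ := by rw [HB.H.map_id]; rfl
    conv_lhs => rw [← h1]
    rw [← biprod.total, Functor.map_add, HB.H.map_comp, HB.H.map_comp]
    rfl
  rw [hσ, per_add]
  refine Submodule.add_mem _ ?_ ?_
  · exact Submodule.mem_sup_left
      ((per_rel (biprod.inl : X ⟶ X ⊞ Y) (HB.H.map biprod.fst σ) ω) ▸ per_mem_PM _ _)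
  · exact Submodule.mem_sup_right
      ((per_rel (biprod.inr : Y ⟶ X ⊞ Y) (HB.H.map biprod.snd σ) ω) ▸ per_mem_PM _ _)

lemma PM_pow_le (M : A) (m : ℕ) :
    PM A K HB HdR (pow A M m) ≤ PM A K HB HdR M := by
  haveI := HB.additive
  rw [PM, Submodule.span_le]
  rintro x ⟨σ, ω, rfl⟩
  have hσ : σ = ∑ j : Fin m,
      HB.H.map (biproduct.ι (fun _ : Fin m => M) j)
        (HB.H.map (biproduct.π (fun _ : Fin m => M) j) σ) := by
    have h1 : HB.H.map (𝟙 (pow A M m)) σ = σ := by rw [HB.H.map_id]; rfl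
    conv_lhs => rw [← h1]
    rw [← biproduct.total, Functor.map_sum]
    simp only [HB.H.map_comp]
    change (ModuleCat.Hom.hom _) σ = _
    rw [ModuleCat.hom_sum, LinearMap.sum_apply]
    exact Finset.sum_congr rfl fun j _ => rfl
  rw [hσ, per_sum]
  refine Submodule.sum_mem _ fun j _ => ?_
  rw [← per_rel]
  exact per_mem_PM _ _

end AuxPeriods

/-- **Proposition (`PROPBASICPROP` 1 & 2).** If `N` is a subobject or a quotient of `M`,
then `P(M ⊕ N) = P(M)` as subspaces of `P(A)`; and `P(M^n) = P(M)` for all `n ≥ 1`. -/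
theorem PM_biprod_and_pow (M : A) :
    (∀ (N : A) (f : N ⟶ M), Mono f →
        PM A K HB HdR (M ⊞ N) = PM A K HB HdR M) ∧
    (∀ (N : A) (g : M ⟶ N), Epi g →
        PM A K HB HdR (M ⊞ N) = PM A K HB HdR M) ∧
    (∀ n : ℕ, 1 ≤ n → PM A K HB HdR (pow A M n) = PM A K HB HdR M) := by
  refine ⟨?_, ?_, ?_⟩
  · intro N f hf
    haveI := hf
    exact le_antisymm ((PM_biprod_le M N).trans (sup_le le_rfl (PM_le_of_mono f)))
      (PM_le_of_mono (biprod.inl : M ⟶ M ⊞ N))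
  · intro N g hg
    haveI := hg
    exact le_antisymm ((PM_biprod_le M N).trans (sup_le le_rfl (PM_le_of_epi g)))
      (PM_le_of_mono (biprod.inl : M ⟶ M ⊞ N))
  · intro n hn
    exact le_antisymm (PM_pow_le M n)
      (PM_le_of_mono (biproduct.ι (fun _ : Fin n => M) ⟨0, hn⟩))
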